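/- If there exists a signed magic array set SMAS(6,b;c) for some b,c ≥ 1, then there exists a signed magic array set SMAS(6,b+4;c). -/

import Mathlib

/-- The set Ω of a signed magic array (set) with N = total number of entries:
Ω = {0, ±1, …, ±(N−1)/2} if N is odd and Ω = {±1, …, ±N/2} if N is even. -/
def SMASet (N : ℕ) : Set ℤ :=
  if N % 2 = 1 then {x : ℤ | 2 * x.natAbs ≤ N - 1}
  else {x : ℤ | x ≠ 0 ∧ 2 * x.natAbs ≤ N}

/-- A signed magic array set SMAS(a,b;e): e fully-filled a×b integer arrays such that
every element of Ω appears exactly once in exactly one array, and all row and column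
sums of each array are 0. -/
def IsSMAS (a b e : ℕ) (A : Fin e → Matrix (Fin a) (Fin b) ℤ) : Prop :=
  (∀ x ∈ SMASet (a * b * e), ∃! p : Fin e × Fin a × Fin b, A p.1 p.2.1 p.2.2 = x) ∧
  (∀ i r c, A i r c ∈ SMASet (a * b * e)) ∧
  (∀ i r, ∑ c, A i r c = 0) ∧
  (∀ i c, ∑ r, A i r c = 0)

def blk : Fin 6 → Fin 4 → ℤ :=
  ![![1,-1,6,-6],![3,-3,10,-10],![7,-7,12,-12],![-2,2,-8,8],![-4,4,-9,9],![-5,5,-11,11]]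

lemma blk_ne (r : Fin 6) (j : Fin 4) : blk r j ≠ 0 := by revert r j; decide

lemma blk_abs (r : Fin 6) (j : Fin 4) : (blk r j).natAbs ≤ 12 := by revert r j; decide

lemma blk_row (r : Fin 6) : ∑ j, blk r j = 0 := by revert r; decide

lemma blk_row_sign (r : Fin 6) : ∑ j, (blk r j).sign = 0 := by revert r; decide

lemma blk_col (j : Fin 4) : ∑ r, blk r j = 0 := by revert j; decide

lemma blk_col_sign (j : Fin 4) : ∑ r, (blk r j).sign = 0 := by revert j; decide

lemma blk_exu (z : ℤ) (h1 : z ≠ 0) (h2 : z.natAbs ≤ 12) :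
    ∃! q : Fin 6 × Fin 4, blk q.1 q.2 = z := by
  have hl : -12 ≤ z := by omega
  have hr : z ≤ 12 := by omega
  interval_cases z <;> simp only [ExistsUnique] <;>
    first | (exact absurd rfl h1) | decide

lemma key (m : ℕ) (z : ℤ) (hz : z ≠ 0) :
    (z.sign * (m:ℤ) + z).natAbs = m + z.natAbs := by
  obtain h | h := hz.lt_or_gt
  · rw [Int.sign_eq_neg_one_of_neg h]; omega
  · rw [Int.sign_eq_one_of_pos h]; omega

lemma key_sign (m : ℕ) (z : ℤ) (hz : z ≠ 0) :
    (z.sign * (m:ℤ) + z).sign = z.sign := by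
  obtain h | h := hz.lt_or_gt
  · rw [Int.sign_eq_neg_one_of_neg h, Int.sign_eq_neg_one_of_neg (by omega)]
  · rw [Int.sign_eq_one_of_pos h, Int.sign_eq_one_of_pos (by omega)]

lemma smas_even (n : ℕ) : SMASet (6*n) = {x : ℤ | x ≠ 0 ∧ 2 * x.natAbs ≤ 6*n} := by
  simp only [SMASet]; rw [if_neg (by omega)]

def extA (b c : ℕ) (A : Fin c → Matrix (Fin 6) (Fin b) ℤ) :
    Fin c → Matrix (Fin 6) (Fin (b+4)) ℤ :=
  fun i r j =>
    if h : (j : ℕ) < b then A i r ⟨j, h⟩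
    else (blk r ⟨(j:ℕ) - b, by have := j.isLt; omega⟩).sign *
           ((3*(b*c) + 12*(i:ℕ) : ℕ) : ℤ) +
         blk r ⟨(j:ℕ) - b, by have := j.isLt; omega⟩

lemma extA_left (b c : ℕ) (A : Fin c → Matrix (Fin 6) (Fin b) ℤ)
    (i : Fin c) (r : Fin 6) (j : Fin (b+4)) (h : (j:ℕ) < b) :
    extA b c A i r j = A i r ⟨j, h⟩ := dif_pos h

lemma extA_right (b c : ℕ) (A : Fin c → Matrix (Fin 6) (Fin b) ℤ)
    (i : Fin c) (r : Fin 6) (j : Fin (b+4)) (h : ¬ (j:ℕ) < b)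
    (hj4 : (j:ℕ) - b < 4) :
    extA b c A i r j = (blk r ⟨(j:ℕ) - b, hj4⟩).sign *
           ((3*(b*c) + 12*(i:ℕ) : ℕ) : ℤ) + blk r ⟨(j:ℕ) - b, hj4⟩ := dif_neg h

lemma extA_natAdd (b c : ℕ) (A : Fin c → Matrix (Fin 6) (Fin b) ℤ)
    (i : Fin c) (r : Fin 6) (j : Fin 4) :
    extA b c A i r (Fin.natAdd b j) = (blk r j).sign *
           ((3*(b*c) + 12*(i:ℕ) : ℕ) : ℤ) + blk r j := by
  have h : ¬ ((Fin.natAdd b j : Fin (b+4)) : ℕ) < b := by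
    simp [Fin.natAdd]
  have hj4 : ((Fin.natAdd b j : Fin (b+4)) : ℕ) - b < 4 := by
    simp [Fin.natAdd]
  rw [extA_right b c A i r _ h hj4]
  have he : (⟨((Fin.natAdd b j : Fin (b+4)) : ℕ) - b, hj4⟩ : Fin 4) = j :=
    Fin.ext (by simp [Fin.natAdd])
  rw [he]

lemma extA_castAdd (b c : ℕ) (A : Fin c → Matrix (Fin 6) (Fin b) ℤ)
    (i : Fin c) (r : Fin 6) (j : Fin b) :
    extA b c A i r (Fin.castAdd 4 j) = A i r j := by
  rw [extA_left b c A i r _ (by simpa using j.isLt)]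
  exact congrArg _ (Fin.ext (by simp))

set_option maxHeartbeats 1600000 in
/-- if an SMAS(6,b;c) exists, then an SMAS(6,b+4;c) exists. -/
theorem stmt_18 (b c : ℕ) (hb : 1 ≤ b) (hc : 1 ≤ c)
    (h : ∃ A : Fin c → Matrix (Fin 6) (Fin b) ℤ, IsSMAS 6 b c A) :
    ∃ B : Fin c → Matrix (Fin 6) (Fin (b + 4)) ℤ, IsSMAS 6 (b + 4) c B := by
  obtain ⟨A, hA1, hA2, hA3, hA4⟩ := h
  have hold : SMASet (6*b*c) = {x : ℤ | x ≠ 0 ∧ 2 * x.natAbs ≤ 6*(b*c)} := by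
    rw [show 6*b*c = 6*(b*c) by ring, smas_even]
  have hnew : SMASet (6*(b+4)*c) = {x : ℤ | x ≠ 0 ∧ 2 * x.natAbs ≤ 6*((b+4)*c)} := by
    rw [show 6*(b+4)*c = 6*((b+4)*c) by ring, smas_even]
  have hbc4 : (b+4)*c = b*c + 4*c := by ring
  refine ⟨extA b c A, ?_, ?_, ?_, ?_⟩
  · -- bijection
    rw [hnew]
    rintro x ⟨hx0, hxle⟩
    by_cases hsmall : 2 * x.natAbs ≤ 6*(b*c)
    · obtain ⟨p, hp, hup⟩ := hA1 x (by rw [hold]; exact ⟨hx0, hsmall⟩)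
      refine ⟨(p.1, p.2.1, Fin.castAdd 4 p.2.2), ?_, ?_⟩
      · simpa [extA_castAdd] using hp
      · rintro ⟨i', r', j'⟩ hq
        by_cases hjb : (j' : ℕ) < b
        · rw [extA_left b c A i' r' j' hjb] at hq
          have := hup (i', r', ⟨j', hjb⟩) hq
          have h1 : i' = p.1 := congrArg Prod.fst this
          have h2 : r' = p.2.1 := congrArg (fun q => q.2.1) this
          have h3 : ((⟨(j':ℕ), hjb⟩ : Fin b) : ℕ) = (p.2.2 : ℕ) := by
            rw [show (⟨(j':ℕ), hjb⟩ : Fin b) = p.2.2 from congrArg (fun q => q.2.2) this]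
          refine Prod.ext h1 (Prod.ext h2 (Fin.ext ?_))
          simpa [Fin.castAdd, Fin.castLE] using h3
        · exfalso
          have hj4 : (j':ℕ) - b < 4 := by have := j'.isLt; omega
          rw [extA_right b c A i' r' j' hjb hj4] at hq
          have hwne := blk_ne r' ⟨(j':ℕ) - b, hj4⟩
          have hkey := key (3*(b*c) + 12*(i':ℕ)) _ hwne
          rw [hq] at hkey
          have hge1 : 1 ≤ (blk r' ⟨(j':ℕ) - b, hj4⟩).natAbs := by omega
          omega
    · -- x is a block value
      have hxabs : 3*(b*c) < x.natAbs := by omega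
      have hxabs2 : x.natAbs ≤ 3*(b*c) + 12*c := by omega
      set n : ℕ := x.natAbs - 3*(b*c) - 1 with hn
      have hnlt : n < 12*c := by omega
      have hilt : n / 12 < c := by omega
      set k : ℕ := n % 12 + 1 with hk
      have hk12 : k ≤ 12 := by omega
      have hMk : x.natAbs = 3*(b*c) + 12*(n/12) + k := by omega
      set z : ℤ := x.sign * k with hz
      have hz0 : z ≠ 0 := by
        simp only [hz, ne_eq, mul_eq_zero, Int.sign_eq_zero_iff_zero, Nat.cast_eq_zero]
        push_neg
        exact ⟨hx0, by omega⟩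
      have hzabs : z.natAbs ≤ 12 := by
        simp only [hz, Int.natAbs_mul, Int.natAbs_sign_of_ne_zero hx0]
        simpa using hk12
      have hzsign : z.sign = x.sign := by
        simp only [hz, Int.sign_mul, Int.sign_sign]
        rw [Int.sign_eq_one_of_pos (by positivity : (0:ℤ) < (k:ℤ))]
        ring
      obtain ⟨q, hqv, huq⟩ := blk_exu z hz0 hzabs
      refine ⟨(⟨n/12, hilt⟩, q.1, Fin.natAdd b q.2), ?_, ?_⟩
      · show extA b c A ⟨n/12, hilt⟩ q.1 (Fin.natAdd b q.2) = x
        rw [extA_natAdd, hqv, hzsign]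
        have : ((3*(b*c) + 12*(n/12) : ℕ) : ℤ) + (k : ℤ) = (x.natAbs : ℤ) := by
          rw [hMk]; push_cast; ring
        calc x.sign * ((3*(b*c) + 12*(n/12) : ℕ) : ℤ) + x.sign * (k:ℤ)
            = x.sign * (((3*(b*c) + 12*(n/12) : ℕ) : ℤ) + (k:ℤ)) := by ring
          _ = x.sign * (x.natAbs : ℤ) := by rw [this]
          _ = x := Int.sign_mul_natAbs x
      · rintro ⟨i', r', j'⟩ hq
        by_cases hjb : (j' : ℕ) < b
        · exfalso
          rw [extA_left b c A i' r' j' hjb] at hq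
          have := hA2 i' r' ⟨j', hjb⟩
          rw [hold] at this
          simp only [Set.mem_setOf_eq] at this
          rw [hq] at this
          exact hsmall this.2
        · have hj4 : (j':ℕ) - b < 4 := by have := j'.isLt; omega
          rw [extA_right b c A i' r' j' hjb hj4] at hq
          set w := blk r' ⟨(j':ℕ) - b, hj4⟩ with hw
          have hwne : w ≠ 0 := blk_ne _ _
          have hkey := key (3*(b*c) + 12*(i':ℕ)) w hwne
          rw [hq] at hkey
          have hwabs : w.natAbs ≤ 12 := blk_abs _ _
          have hwge1 : 1 ≤ w.natAbs := by omega
          have hi' : (i' : ℕ) = n / 12 := by omega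
          have hwk : w.natAbs = k := by omega
          have hwsign : w.sign = x.sign := by
            have := key_sign (3*(b*c) + 12*(i':ℕ)) w hwne
            rw [hq] at this; exact this.symm
          have hwz : w = z := by
            rw [hz, ← hwsign, ← hwk]
            exact (Int.sign_mul_natAbs w).symm
          have hq2 := huq (r', ⟨(j':ℕ) - b, hj4⟩) hwz
          have e1 : r' = q.1 := congrArg Prod.fst hq2
          have e2 : ((⟨(j':ℕ) - b, hj4⟩ : Fin 4) : ℕ) = (q.2 : ℕ) := by
            rw [show (⟨(j':ℕ) - b, hj4⟩ : Fin 4) = q.2 from congrArg Prod.snd hq2]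
          refine Prod.ext (Fin.ext hi') (Prod.ext e1 (Fin.ext ?_))
          simp only [Fin.natAdd] at *
          omega
  · -- membership
    intro i r j
    rw [hnew]
    by_cases hjb : (j : ℕ) < b
    · rw [extA_left b c A i r j hjb]
      have := hA2 i r ⟨j, hjb⟩
      rw [hold] at this
      simp only [Set.mem_setOf_eq] at this
      exact ⟨this.1, by omega⟩
    · have hj4 : (j:ℕ) - b < 4 := by have := j.isLt; omega
      rw [extA_right b c A i r j hjb hj4]
      have hwne := blk_ne r ⟨(j:ℕ) - b, hj4⟩
      have hkey := key (3*(b*c) + 12*(i:ℕ)) _ hwne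
      have hwabs := blk_abs r ⟨(j:ℕ) - b, hj4⟩
      have hilt := i.isLt
      constructor
      · intro h0; rw [h0] at hkey; simp at hkey; omega
      · omega
  · -- row sums
    intro i r
    rw [Fin.sum_univ_add]
    have h1 : ∑ j : Fin b, extA b c A i r (Fin.castAdd 4 j) = 0 := by
      simp only [extA_castAdd]; exact hA3 i r
    have h2 : ∑ j : Fin 4, extA b c A i r (Fin.natAdd b j) = 0 := by
      simp only [extA_natAdd]
      rw [Finset.sum_add_distrib, ← Finset.sum_mul, blk_row_sign, blk_row]
      ring
    rw [h1, h2, add_zero]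
  · -- column sums
    intro i j
    by_cases hjb : (j : ℕ) < b
    · have : ∀ r, extA b c A i r j = A i r ⟨j, hjb⟩ := fun r => extA_left b c A i r j hjb
      simp only [this]
      exact hA4 i ⟨j, hjb⟩
    · have hj4 : (j:ℕ) - b < 4 := by have := j.isLt; omega
      have : ∀ r, extA b c A i r j = (blk r ⟨(j:ℕ) - b, hj4⟩).sign *
          ((3*(b*c) + 12*(i:ℕ) : ℕ) : ℤ) + blk r ⟨(j:ℕ) - b, hj4⟩ :=
        fun r => extA_right b c A i r j hjb hj4
      simp only [this]
      rw [Finset.sum_add_distrib, ← Finset.sum_mul, blk_col_sign, blk_col]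
      ring
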